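/- arXiv:1812.06794 — 4 statements merged into one kernel-verified Lean document; each statement's English description precedes it below -/
import Mathlib

section
/- Let a < b, n ∈ ℕ, and let B0, N0 : [a,b] → ℝ^{n×n} and B1, B2, N1, N2 : [a,b]×[a,b] → ℝ^{n×n} be bounded measurable matrix-valued functions. Define R0(s) = B0(s)N0(s); R1(s,θ) = B0(s)N1(s,θ) + B1(s,θ)N0(θ) + ∫ₐ^θ B1(s,ξ)N2(ξ,θ) dξ + ∫_θ^s B1(s,ξ)N1(ξ,θ) dξ + ∫_s^b B2(s,ξ)N1(ξ,θ) dξ; and R2(s,θ) = B0(s)N2(s,θ) + B2(s,θ)N0(θ) + ∫ₐ^s B1(s,ξ)N2(ξ,θ) dξ + ∫_s^θ B2(s,ξ)N2(ξ,θ) dξ + ∫_θ^b B2(s,ξ)N1(ξ,θ) dξ. Then the composition of the corresponding 3-PI operators satisfies P_{B0,B1,B2} ∘ P_{N0,N1,N2} = P_{R0,R1,R2}; that is, for every x ∈ L²([a,b];ℝⁿ) and almost every s ∈ [a,b], (P_{B0,B1,B2}(P_{N0,N1,N2} x))(s) = (P_{R0,R1,R2} x)(s). -/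
open MeasureTheory Set Matrix ENNReal

noncomputable section

/-- The 3-PI (partial integral) operator with multiplier N0 and kernels N1 (below
the diagonal) and N2 (above the diagonal) on the interval [a,b]. -/
def PIop {n : ℕ} (a b : ℝ)
    (N0 : ℝ → Matrix (Fin n) (Fin n) ℝ) (N1 N2 : ℝ → ℝ → Matrix (Fin n) (Fin n) ℝ)
    (x : ℝ → Fin n → ℝ) : ℝ → Fin n → ℝ := fun s =>
  (N0 s).mulVec (x s) + (∫ θ in a..s, (N1 s θ).mulVec (x θ)) +
    ∫ θ in s..b, (N2 s θ).mulVec (x θ)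

namespace Stmt2Aux

variable {n : ℕ}

/-- combined kernel -/
def ker (C1 C2 : ℝ → ℝ → Matrix (Fin n) (Fin n) ℝ) : ℝ → ℝ → Matrix (Fin n) (Fin n) ℝ :=
  fun s θ => if θ ≤ s then C1 s θ else C2 s θ

lemma ker_of_le {C1 C2 : ℝ → ℝ → Matrix (Fin n) (Fin n) ℝ} {s θ : ℝ} (h : θ ≤ s) :
    ker C1 C2 s θ = C1 s θ := if_pos h

lemma ker_of_gt {C1 C2 : ℝ → ℝ → Matrix (Fin n) (Fin n) ℝ} {s θ : ℝ} (h : s < θ) :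
    ker C1 C2 s θ = C2 s θ := if_neg (not_le.mpr h)

lemma ker_meas {C1 C2 : ℝ → ℝ → Matrix (Fin n) (Fin n) ℝ}
    (h1 : ∀ i j, Measurable fun p : ℝ × ℝ => C1 p.1 p.2 i j)
    (h2 : ∀ i j, Measurable fun p : ℝ × ℝ => C2 p.1 p.2 i j) :
    ∀ i j, Measurable fun p : ℝ × ℝ => ker C1 C2 p.1 p.2 i j := by
  intro i j
  have : (fun p : ℝ × ℝ => ker C1 C2 p.1 p.2 i j) =
      fun p : ℝ × ℝ => if p.2 ≤ p.1 then C1 p.1 p.2 i j else C2 p.1 p.2 i j := by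
    funext p; by_cases h : p.2 ≤ p.1 <;> simp [ker, h]
  rw [this]
  exact Measurable.ite (measurableSet_le measurable_snd measurable_fst) (h1 i j) (h2 i j)

lemma ker_bound {a b M : ℝ} {C1 C2 : ℝ → ℝ → Matrix (Fin n) (Fin n) ℝ}
    (h1 : ∀ s ∈ Icc a b, ∀ θ ∈ Icc a b, ∀ i j, |C1 s θ i j| ≤ M)
    (h2 : ∀ s ∈ Icc a b, ∀ θ ∈ Icc a b, ∀ i j, |C2 s θ i j| ≤ M) :
    ∀ s ∈ Icc a b, ∀ θ ∈ Icc a b, ∀ i j, |ker C1 C2 s θ i j| ≤ max M 0 := by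
  intro s hs θ hθ i j
  by_cases h : θ ≤ s
  · rw [ker_of_le h]; exact (h1 s hs θ hθ i j).trans (le_max_left _ _)
  · rw [ker_of_gt (not_le.mp h)]; exact (h2 s hs θ hθ i j).trans (le_max_left _ _)

lemma norm_mulVec_le (A : Matrix (Fin n) (Fin n) ℝ) (v : Fin n → ℝ) {M : ℝ}
    (h : ∀ i j, |A i j| ≤ M) : ‖A.mulVec v‖ ≤ (n * M) * ‖v‖ := by
  rcases Nat.eq_zero_or_pos n with hn | hn
  · subst hn
    have : v = 0 := Subsingleton.elim _ _
    simp only [this]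
    have h0 : A.mulVec (0 : Fin 0 → ℝ) = 0 := Subsingleton.elim _ _
    simp [h0]
  · have hM : 0 ≤ M := le_trans (abs_nonneg _) (h ⟨0, hn⟩ ⟨0, hn⟩)
    have hb : 0 ≤ (n * M) * ‖v‖ := by positivity
    rw [pi_norm_le_iff_of_nonneg hb]
    intro i
    calc ‖A.mulVec v i‖ = |∑ j, A i j * v j| := by rfl
      _ ≤ ∑ j, |A i j * v j| := Finset.abs_sum_le_sum_abs _ _
      _ ≤ ∑ _j : Fin n, M * ‖v‖ := by
          refine Finset.sum_le_sum fun j _ => ?_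
          rw [abs_mul]
          exact mul_le_mul (h i j) (norm_le_pi_norm v j) (abs_nonneg _) hM
      _ = (n * M) * ‖v‖ := by
          rw [Finset.sum_const, Finset.card_univ, Fintype.card_fin, nsmul_eq_mul, mul_assoc]

lemma mul_entry_bound {P Q : Matrix (Fin n) (Fin n) ℝ} {M1 M2 : ℝ} (h1 : 0 ≤ M1) (h2 : 0 ≤ M2)
    (hP : ∀ i j, |P i j| ≤ M1) (hQ : ∀ i j, |Q i j| ≤ M2) :
    ∀ i j, |(P * Q) i j| ≤ n * (M1 * M2) := by
  intro i j
  rw [Matrix.mul_apply]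
  calc |∑ k, P i k * Q k j| ≤ ∑ k, |P i k * Q k j| := Finset.abs_sum_le_sum_abs _ _
    _ ≤ ∑ _k : Fin n, M1 * M2 := Finset.sum_le_sum fun k _ => by
        rw [abs_mul]; exact mul_le_mul (hP i k) (hQ k j) (abs_nonneg _) h1
    _ = n * (M1 * M2) := by
        rw [Finset.sum_const, Finset.card_univ, Fintype.card_fin, nsmul_eq_mul]

lemma measurable_mul_entry {α : Type} [MeasurableSpace α] {P Q : α → Matrix (Fin n) (Fin n) ℝ}
    (hP : ∀ i j, Measurable fun t => P t i j) (hQ : ∀ i j, Measurable fun t => Q t i j) :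
    ∀ i j, Measurable fun t => (P t * Q t) i j := fun i j => by
  simp only [Matrix.mul_apply]
  exact Finset.measurable_sum _ fun k _ => (hP i k).mul (hQ k j)

lemma aesm_mulVec {α : Type} [MeasurableSpace α] {μ : Measure α}
    {A : α → Matrix (Fin n) (Fin n) ℝ}
    (hA : ∀ i j, Measurable fun t => A t i j) {v : α → Fin n → ℝ}
    (hv : AEStronglyMeasurable v μ) :
    AEStronglyMeasurable (fun t => (A t).mulVec (v t)) μ := by
  obtain ⟨g, hg, hvg⟩ := hv.aemeasurable
  have hmeas : Measurable (fun t => (A t).mulVec (g t)) := by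
    rw [measurable_pi_iff]
    intro i
    have : (fun t => (A t).mulVec (g t) i) = fun t => ∑ j, A t i j * g t j := rfl
    rw [this]
    exact Finset.measurable_sum _ fun j _ => (hA i j).mul ((measurable_pi_apply j).comp hg)
  exact hmeas.aestronglyMeasurable.congr (hvg.mono fun t ht => by simp only [ht])

lemma integrable_mulVec {α : Type} [MeasurableSpace α] {μ : Measure α}
    {A : α → Matrix (Fin n) (Fin n) ℝ}
    (hA : ∀ i j, Measurable fun t => A t i j) {M : ℝ}
    (hAb : ∀ᵐ t ∂μ, ∀ i j, |A t i j| ≤ M) {v : α → Fin n → ℝ}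
    (hv : Integrable v μ) :
    Integrable (fun t => (A t).mulVec (v t)) μ := by
  refine Integrable.mono' (hv.norm.const_mul (n * M)) (aesm_mulVec hA hv.aestronglyMeasurable) ?_
  filter_upwards [hAb] with t ht
  exact norm_mulVec_le _ _ ht

lemma integrable_of_bdd {α : Type} [MeasurableSpace α] {μ : Measure α} [IsFiniteMeasure μ]
    {f : α → ℝ} (hm : AEStronglyMeasurable f μ) {C : ℝ} (h : ∀ᵐ t ∂μ, |f t| ≤ C) :
    Integrable f μ :=
  Integrable.mono' (integrable_const C) hm (by simpa [Real.norm_eq_abs] using h)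

lemma mulVec_integral {α : Type} [MeasurableSpace α] {μ : Measure α}
    (A : Matrix (Fin n) (Fin n) ℝ) {f : α → Fin n → ℝ} (hf : Integrable f μ) :
    A.mulVec (∫ t, f t ∂μ) = ∫ t, A.mulVec (f t) ∂μ := by
  have := (LinearMap.toContinuousLinearMap (Matrix.mulVecLin A)).integral_comp_comm hf
  simpa [Matrix.mulVecLin_apply] using this.symm

lemma integral_mulVec_const {α : Type} [MeasurableSpace α] {μ : Measure α} [IsFiniteMeasure μ]
    {A : α → Matrix (Fin n) (Fin n) ℝ} (hA : ∀ i j, Measurable fun t => A t i j)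
    {M0 : ℝ} (hAb : ∀ᵐ t ∂μ, ∀ i j, |A t i j| ≤ M0) (v : Fin n → ℝ) :
    ∫ t, (A t).mulVec v ∂μ = (Matrix.of fun i j => ∫ t, A t i j ∂μ).mulVec v := by
  have hint : ∀ i j, Integrable (fun t => A t i j) μ := fun i j =>
    integrable_of_bdd (hA i j).aestronglyMeasurable (hAb.mono fun t ht => ht i j)
  have hintv : Integrable (fun t => (A t).mulVec v) μ :=
    integrable_mulVec hA hAb (integrable_const v)
  funext i
  have hproj := (ContinuousLinearMap.proj (R := ℝ) (φ := fun _ : Fin n => ℝ) i).integral_comp_comm hintv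
  simp only [ContinuousLinearMap.proj_apply] at hproj
  rw [← hproj]
  simp only [Matrix.mulVec, dotProduct, Matrix.of_apply]
  rw [integral_finset_sum _ fun j _ => (hint i j).mul_const (v j)]
  exact Finset.sum_congr rfl fun j _ => integral_mul_const _ _

lemma PIop_eq {a b : ℝ}
    (C0 : ℝ → Matrix (Fin n) (Fin n) ℝ) (C1 C2 : ℝ → ℝ → Matrix (Fin n) (Fin n) ℝ)
    (f : ℝ → Fin n → ℝ) {s : ℝ} (hs : s ∈ Icc a b)
    (hint : IntegrableOn (fun θ => (ker C1 C2 s θ).mulVec (f θ)) (Icc a b) volume) :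
    PIop a b C0 C1 C2 f s =
      (C0 s).mulVec (f s) + ∫ θ in Icc a b, (ker C1 C2 s θ).mulVec (f θ) := by
  have h1 : Ioc a s ⊆ Icc a b := Set.Ioc_subset_Icc_self.trans (Icc_subset_Icc le_rfl hs.2)
  have h2 : Ioc s b ⊆ Icc a b := Set.Ioc_subset_Icc_self.trans (Icc_subset_Icc hs.1 le_rfl)
  rw [PIop, intervalIntegral.integral_of_le hs.1, intervalIntegral.integral_of_le hs.2,
    integral_Icc_eq_integral_Ioc, ← Set.Ioc_union_Ioc_eq_Ioc hs.1 hs.2,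
    setIntegral_union ((Set.Ioc_disjoint_Ioc_of_le le_rfl)) measurableSet_Ioc
      (hint.mono_set h1) (hint.mono_set h2)]
  rw [setIntegral_congr_fun measurableSet_Ioc
      (fun θ hθ => by simp only [ker_of_le hθ.2] :
        EqOn (fun θ => (ker C1 C2 s θ).mulVec (f θ))
          (fun θ => (C1 s θ).mulVec (f θ)) (Ioc a s)),
    setIntegral_congr_fun measurableSet_Ioc
      (fun θ hθ => by simp only [ker_of_gt hθ.1] :
        EqOn (fun θ => (ker C1 C2 s θ).mulVec (f θ))
          (fun θ => (C2 s θ).mulVec (f θ)) (Ioc s b)),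
    add_assoc]

end Stmt2Aux

open Stmt2Aux in
set_option maxHeartbeats 2000000 in
/-- composition of two 3-PI operators is the 3-PI operator with the
composition parameters {R0, R1, R2}. -/
theorem stmt2 (a b : ℝ) (hab : a < b) (n : ℕ)
    (B0 N0 : ℝ → Matrix (Fin n) (Fin n) ℝ)
    (B1 B2 N1 N2 : ℝ → ℝ → Matrix (Fin n) (Fin n) ℝ)
    (hB0m : ∀ i j, Measurable fun s => B0 s i j)
    (hN0m : ∀ i j, Measurable fun s => N0 s i j)
    (hB1m : ∀ i j, Measurable fun p : ℝ × ℝ => B1 p.1 p.2 i j)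
    (hB2m : ∀ i j, Measurable fun p : ℝ × ℝ => B2 p.1 p.2 i j)
    (hN1m : ∀ i j, Measurable fun p : ℝ × ℝ => N1 p.1 p.2 i j)
    (hN2m : ∀ i j, Measurable fun p : ℝ × ℝ => N2 p.1 p.2 i j)
    (M : ℝ)
    (hB0b : ∀ s ∈ Icc a b, ∀ i j, |B0 s i j| ≤ M)
    (hN0b : ∀ s ∈ Icc a b, ∀ i j, |N0 s i j| ≤ M)
    (hB1b : ∀ s ∈ Icc a b, ∀ θ ∈ Icc a b, ∀ i j, |B1 s θ i j| ≤ M)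
    (hB2b : ∀ s ∈ Icc a b, ∀ θ ∈ Icc a b, ∀ i j, |B2 s θ i j| ≤ M)
    (hN1b : ∀ s ∈ Icc a b, ∀ θ ∈ Icc a b, ∀ i j, |N1 s θ i j| ≤ M)
    (hN2b : ∀ s ∈ Icc a b, ∀ θ ∈ Icc a b, ∀ i j, |N2 s θ i j| ≤ M) :
    ∀ x : ℝ → Fin n → ℝ, MemLp x 2 (volume.restrict (Icc a b)) →
      ∀ᵐ s ∂(volume.restrict (Icc a b)),
        PIop a b B0 B1 B2 (PIop a b N0 N1 N2 x) s =
          PIop a b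
            (fun s => B0 s * N0 s)
            (fun s θ => Matrix.of fun i j =>
              (B0 s * N1 s θ) i j + (B1 s θ * N0 θ) i j +
              (∫ ξ in a..θ, (B1 s ξ * N2 ξ θ) i j) +
              (∫ ξ in θ..s, (B1 s ξ * N1 ξ θ) i j) +
              ∫ ξ in s..b, (B2 s ξ * N1 ξ θ) i j)
            (fun s θ => Matrix.of fun i j =>
              (B0 s * N2 s θ) i j + (B2 s θ * N0 θ) i j +
              (∫ ξ in a..s, (B1 s ξ * N2 ξ θ) i j) +
              (∫ ξ in s..θ, (B2 s ξ * N2 ξ θ) i j) +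
              ∫ ξ in θ..b, (B2 s ξ * N1 ξ θ) i j)
            x s := by
  intro x hx
  have hIm : MeasurableSet (Icc a b) := measurableSet_Icc
  set μ : Measure ℝ := volume.restrict (Icc a b) with hμ
  haveI hfin : IsFiniteMeasure μ :=
    ⟨by rw [hμ, Measure.restrict_apply_univ]; exact measure_Icc_lt_top⟩
  set M' : ℝ := max M 0 with hM'def
  have hM'0 : (0:ℝ) ≤ M' := le_max_right _ _
  -- measurability
  have hKBm : ∀ i j, Measurable fun p : ℝ × ℝ => (ker B1 B2) p.1 p.2 i j := ker_meas hB1m hB2m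
  have hKNm : ∀ i j, Measurable fun p : ℝ × ℝ => (ker N1 N2) p.1 p.2 i j := ker_meas hN1m hN2m
  have hKBsm : ∀ s i j, Measurable fun θ => (ker B1 B2) s θ i j := fun s i j =>
    (hKBm i j).comp (measurable_const.prodMk measurable_id)
  have hKNsm : ∀ s i j, Measurable fun θ => (ker N1 N2) s θ i j := fun s i j =>
    (hKNm i j).comp (measurable_const.prodMk measurable_id)
  have hKNθm : ∀ ξ i j, Measurable fun θ => (ker N1 N2) θ ξ i j := fun ξ i j =>
    (hKNm i j).comp (measurable_id.prodMk measurable_const)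
  -- bounds
  have hKBb : ∀ s ∈ Icc a b, ∀ θ ∈ Icc a b, ∀ i j, |(ker B1 B2) s θ i j| ≤ M' := ker_bound hB1b hB2b
  have hKNb : ∀ s ∈ Icc a b, ∀ θ ∈ Icc a b, ∀ i j, |(ker N1 N2) s θ i j| ≤ M' := ker_bound hN1b hN2b
  have hB0b' : ∀ s ∈ Icc a b, ∀ i j, |B0 s i j| ≤ M' := fun s hs i j =>
    (hB0b s hs i j).trans (le_max_left _ _)
  have hN0b' : ∀ s ∈ Icc a b, ∀ i j, |N0 s i j| ≤ M' := fun s hs i j =>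
    (hN0b s hs i j).trans (le_max_left _ _)
  -- integrability of x
  have hxi : Integrable x μ :=
    memLp_one_iff_integrable.mp (hx.mono_exponent (by norm_num))
  have haeI : ∀ᵐ t ∂μ, t ∈ Icc a b := ae_restrict_mem hIm
  have haeP : ∀ᵐ p ∂(μ.prod μ), p.1 ∈ Icc a b ∧ p.2 ∈ Icc a b := by
    rw [hμ, Measure.prod_restrict]
    filter_upwards [ae_restrict_mem (hIm.prod hIm)] with p hp
    exact ⟨hp.1, hp.2⟩
  -- integrability of inner-kernel sections
  have hKNint : ∀ r ∈ Icc a b, Integrable (fun ξ => ((ker N1 N2) r ξ).mulVec (x ξ)) μ := fun r hr =>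
    integrable_mulVec (hKNsm r) (haeI.mono fun ξ hξ => hKNb r hr ξ hξ) hxi
  -- the inner PIop in set-integral form
  have hyA : ∀ r ∈ Icc a b, PIop a b N0 N1 N2 x r
      = (N0 r).mulVec (x r) + ∫ ξ, ((ker N1 N2) r ξ).mulVec (x ξ) ∂μ := fun r hr => by
    rw [hμ]
    exact PIop_eq N0 N1 N2 x hr (hKNint r hr)
  -- integrability of the inner PIop
  have hFaesm : AEStronglyMeasurable (fun p : ℝ × ℝ => ((ker N1 N2) p.1 p.2).mulVec (x p.2)) (μ.prod μ) :=
    aesm_mulVec hKNm hxi.aestronglyMeasurable.comp_snd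
  have hzb : ∀ᵐ r ∂μ, ‖∫ ξ, ((ker N1 N2) r ξ).mulVec (x ξ) ∂μ‖ ≤ (n * M') * ∫ ξ, ‖x ξ‖ ∂μ := by
    filter_upwards [haeI] with r hr
    calc ‖∫ ξ, ((ker N1 N2) r ξ).mulVec (x ξ) ∂μ‖
        ≤ ∫ ξ, ‖((ker N1 N2) r ξ).mulVec (x ξ)‖ ∂μ := norm_integral_le_integral_norm _
      _ ≤ ∫ ξ, (n * M') * ‖x ξ‖ ∂μ := by
          refine integral_mono_ae (hKNint r hr).norm (hxi.norm.const_mul _) ?_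
          filter_upwards [haeI] with ξ hξ
          exact norm_mulVec_le _ _ (hKNb r hr ξ hξ)
      _ = (n * M') * ∫ ξ, ‖x ξ‖ ∂μ := integral_const_mul _ _
  have hz : Integrable (fun r => ∫ ξ, ((ker N1 N2) r ξ).mulVec (x ξ) ∂μ) μ := by
    refine Integrable.mono' (integrable_const ((n * M') * ∫ ξ, ‖x ξ‖ ∂μ))
      hFaesm.integral_prod_right' ?_
    filter_upwards [hzb] with r hr using hr
  have hyint : Integrable (PIop a b N0 N1 N2 x) μ := by
    refine Integrable.congr ((integrable_mulVec hN0m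
      (haeI.mono fun r hr => hN0b' r hr) hxi).add hz) ?_
    filter_upwards [haeI] with r hr
    exact (hyA r hr).symm
  -- pointwise (in s) main computation
  filter_upwards [haeI] with s hs
  have h1sub : Ioc a s ⊆ Icc a b := Set.Ioc_subset_Icc_self.trans (Icc_subset_Icc le_rfl hs.2)
  have h2sub : Ioc s b ⊆ Icc a b := Set.Ioc_subset_Icc_self.trans (Icc_subset_Icc hs.1 le_rfl)
  have hBint : Integrable (fun θ => (ker B1 B2 s θ).mulVec (PIop a b N0 N1 N2 x θ)) μ :=
    integrable_mulVec (hKBsm s) (haeI.mono fun θ hθ => hKBb s hs θ hθ) hyint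
  have hstep : ∀ θ ∈ Icc a b, (ker B1 B2 s θ).mulVec (PIop a b N0 N1 N2 x θ)
      = (ker B1 B2 s θ * N0 θ).mulVec (x θ)
        + ∫ ξ, (ker B1 B2 s θ * ker N1 N2 θ ξ).mulVec (x ξ) ∂μ := fun θ hθ => by
    rw [hyA θ hθ, Matrix.mulVec_add, Matrix.mulVec_mulVec, mulVec_integral _ (hKNint θ hθ)]
    congr 1
    simp only [Matrix.mulVec_mulVec]
  have h3int : Integrable (fun θ => (ker B1 B2 s θ * N0 θ).mulVec (x θ)) μ :=
    integrable_mulVec (measurable_mul_entry (hKBsm s) hN0m)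
      (haeI.mono fun θ hθ => mul_entry_bound hM'0 hM'0 (hKBb s hs θ hθ) (hN0b' θ hθ)) hxi
  have hF2m : ∀ i j, Measurable fun p : ℝ × ℝ => (ker B1 B2 s p.1 * ker N1 N2 p.1 p.2) i j :=
    measurable_mul_entry (fun i j => (hKBsm s i j).comp measurable_fst) hKNm
  have hF2b : ∀ᵐ p ∂(μ.prod μ), ∀ i j,
      |(ker B1 B2 s p.1 * ker N1 N2 p.1 p.2) i j| ≤ n * (M' * M') :=
    haeP.mono fun p hp =>
      mul_entry_bound hM'0 hM'0 (hKBb s hs p.1 hp.1) (hKNb p.1 hp.1 p.2 hp.2)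
  have hxsnd : Integrable (fun p : ℝ × ℝ => x p.2) (μ.prod μ) := by
    refine (integrable_prod_iff hxi.aestronglyMeasurable.comp_snd).mpr ⟨?_, ?_⟩
    · exact Filter.Eventually.of_forall fun θ => hxi
    · exact integrable_const (∫ ξ, ‖x ξ‖ ∂μ)
  have hF2prod : Integrable
      (fun p : ℝ × ℝ => (ker B1 B2 s p.1 * ker N1 N2 p.1 p.2).mulVec (x p.2)) (μ.prod μ) :=
    integrable_mulVec hF2m hF2b hxsnd
  have h4int : Integrable (fun θ => ∫ ξ, (ker B1 B2 s θ * ker N1 N2 θ ξ).mulVec (x ξ) ∂μ) μ :=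
    hF2prod.integral_prod_left
  have hsecθ : ∀ ξ ∈ Icc a b, (∫ θ, (ker B1 B2 s θ * ker N1 N2 θ ξ).mulVec (x ξ) ∂μ)
      = (Matrix.of fun i j => ∫ θ, (ker B1 B2 s θ * ker N1 N2 θ ξ) i j ∂μ).mulVec (x ξ) :=
    fun ξ hξ =>
      integral_mulVec_const (measurable_mul_entry (hKBsm s) (hKNθm ξ))
        (haeI.mono fun θ hθ =>
          mul_entry_bound hM'0 hM'0 (hKBb s hs θ hθ) (hKNb θ hθ ξ hξ)) _
  -- expansion of the two parts of the outer operator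
  have hT1 : (B0 s).mulVec (PIop a b N0 N1 N2 x s)
      = (B0 s * N0 s).mulVec (x s) + ∫ ξ, (B0 s * ker N1 N2 s ξ).mulVec (x ξ) ∂μ := by
    rw [hyA s hs, Matrix.mulVec_add, Matrix.mulVec_mulVec, mulVec_integral _ (hKNint s hs)]
    congr 1
    simp only [Matrix.mulVec_mulVec]
  have hT2 : (∫ θ, (ker B1 B2 s θ).mulVec (PIop a b N0 N1 N2 x θ) ∂μ)
      = (∫ θ, (ker B1 B2 s θ * N0 θ).mulVec (x θ) ∂μ)
        + ∫ ξ, (Matrix.of fun i j =>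
            ∫ θ, (ker B1 B2 s θ * ker N1 N2 θ ξ) i j ∂μ).mulVec (x ξ) ∂μ := by
    rw [integral_congr_ae (g := fun θ => (ker B1 B2 s θ * N0 θ).mulVec (x θ)
          + ∫ ξ, (ker B1 B2 s θ * ker N1 N2 θ ξ).mulVec (x ξ) ∂μ)
        (by filter_upwards [haeI] with θ hθ; exact hstep θ hθ)]
    rw [integral_add h3int h4int]
    congr 1
    rw [MeasureTheory.integral_integral_swap hF2prod]
    refine integral_congr_ae ?_
    filter_upwards [haeI] with ξ hξ
    exact hsecθ ξ hξ
  have h2int : Integrable (fun ξ => (B0 s * ker N1 N2 s ξ).mulVec (x ξ)) μ :=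
    integrable_mulVec (A := fun ξ => B0 s * ker N1 N2 s ξ)
      (measurable_mul_entry (P := fun _ => B0 s) (Q := fun ξ => ker N1 N2 s ξ)
        (fun _ _ => measurable_const) (hKNsm s))
      (haeI.mono fun ξ hξ => mul_entry_bound hM'0 hM'0 (hB0b' s hs) (hKNb s hs ξ hξ)) hxi
  have hqint : Integrable (fun ξ =>
      (Matrix.of fun i j =>
        ∫ θ, (ker B1 B2 s θ * ker N1 N2 θ ξ) i j ∂μ).mulVec (x ξ)) μ := by
    refine hF2prod.integral_prod_right.congr ?_
    filter_upwards [haeI] with ξ hξ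
    exact hsecθ ξ hξ
  have hrest : Integrable (fun ξ => (ker B1 B2 s ξ * N0 ξ).mulVec (x ξ)
      + (Matrix.of fun i j =>
          ∫ θ, (ker B1 B2 s θ * ker N1 N2 θ ξ) i j ∂μ).mulVec (x ξ)) μ :=
    h3int.add hqint
  have hG : (∫ ξ, (B0 s * ker N1 N2 s ξ + (ker B1 B2 s ξ * N0 ξ
          + Matrix.of fun i j =>
              ∫ θ, (ker B1 B2 s θ * ker N1 N2 θ ξ) i j ∂μ)).mulVec (x ξ) ∂μ)
      = (∫ ξ, (B0 s * ker N1 N2 s ξ).mulVec (x ξ) ∂μ)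
        + ((∫ θ, (ker B1 B2 s θ * N0 θ).mulVec (x θ) ∂μ)
          + ∫ ξ, (Matrix.of fun i j =>
              ∫ θ, (ker B1 B2 s θ * ker N1 N2 θ ξ) i j ∂μ).mulVec (x ξ) ∂μ) :=
    calc (∫ ξ, (B0 s * ker N1 N2 s ξ + (ker B1 B2 s ξ * N0 ξ
            + Matrix.of fun i j =>
                ∫ θ, (ker B1 B2 s θ * ker N1 N2 θ ξ) i j ∂μ)).mulVec (x ξ) ∂μ)
        = ∫ ξ, ((B0 s * ker N1 N2 s ξ).mulVec (x ξ)
            + ((ker B1 B2 s ξ * N0 ξ).mulVec (x ξ)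
              + (Matrix.of fun i j =>
                  ∫ θ, (ker B1 B2 s θ * ker N1 N2 θ ξ) i j ∂μ).mulVec (x ξ))) ∂μ :=
          integral_congr_ae (Filter.Eventually.of_forall fun ξ => by
            simp [Matrix.add_mulVec])
      _ = (∫ ξ, (B0 s * ker N1 N2 s ξ).mulVec (x ξ) ∂μ)
            + ∫ ξ, ((ker B1 B2 s ξ * N0 ξ).mulVec (x ξ)
              + (Matrix.of fun i j =>
                  ∫ θ, (ker B1 B2 s θ * ker N1 N2 θ ξ) i j ∂μ).mulVec (x ξ)) ∂μ :=
          integral_add h2int hrest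
      _ = (∫ ξ, (B0 s * ker N1 N2 s ξ).mulVec (x ξ) ∂μ)
            + ((∫ θ, (ker B1 B2 s θ * N0 θ).mulVec (x θ) ∂μ)
              + ∫ ξ, (Matrix.of fun i j =>
                  ∫ θ, (ker B1 B2 s θ * ker N1 N2 θ ξ) i j ∂μ).mulVec (x ξ) ∂μ) :=
          congrArg (fun t => (∫ ξ, (B0 s * ker N1 N2 s ξ).mulVec (x ξ) ∂μ) + t)
            (integral_add h3int hqint)
  have hGint : Integrable (fun ξ => (B0 s * ker N1 N2 s ξ + (ker B1 B2 s ξ * N0 ξ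
      + Matrix.of fun i j =>
          ∫ θ, (ker B1 B2 s θ * ker N1 N2 θ ξ) i j ∂μ)).mulVec (x ξ)) μ := by
    refine (h2int.add (h3int.add hqint)).congr ?_
    exact Filter.Eventually.of_forall fun ξ => by simp [Matrix.add_mulVec]
  -- scalar-level integrability of the product kernel entries
  have hentint : ∀ ξ ∈ Icc a b, ∀ i j, IntegrableOn
      (fun θ => (ker B1 B2 s θ * ker N1 N2 θ ξ) i j) (Icc a b) volume := by
    intro ξ hξ i j
    have h : Integrable (fun θ => (ker B1 B2 s θ * ker N1 N2 θ ξ) i j) μ :=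
      integrable_of_bdd (measurable_mul_entry (hKBsm s) (hKNθm ξ) i j).aestronglyMeasurable
        (haeI.mono fun θ hθ =>
          mul_entry_bound hM'0 hM'0 (hKBb s hs θ hθ) (hKNb θ hθ ξ hξ) i j)
    rwa [hμ] at h
  have hne : ∀ ξ : ℝ, ∀ᵐ θ : ℝ ∂(volume : Measure ℝ), θ ≠ ξ := by
    intro ξ
    rw [ae_iff]
    simp only [not_not, Set.setOf_eq_eq_singleton]
    exact measure_singleton ξ
  have hQ1 : ∀ ξ ∈ Ioc a s, ∀ i j, (∫ θ, (ker B1 B2 s θ * ker N1 N2 θ ξ) i j ∂μ)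
      = (∫ θ in a..ξ, (B1 s θ * N2 θ ξ) i j) + (∫ θ in ξ..s, (B1 s θ * N1 θ ξ) i j)
        + ∫ θ in s..b, (B2 s θ * N1 θ ξ) i j := by
    intro ξ hξ i j
    have hξI : ξ ∈ Icc a b := h1sub hξ
    have hent := hentint ξ hξI i j
    have c1 : ∫ θ in Ioc a ξ, (ker B1 B2 s θ * ker N1 N2 θ ξ) i j
        = ∫ θ in Ioc a ξ, (B1 s θ * N2 θ ξ) i j := by
      refine setIntegral_congr_ae measurableSet_Ioc ?_
      filter_upwards [hne ξ] with θ hθne hθ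
      rw [ker_of_le (hθ.2.trans hξ.2), ker_of_gt (lt_of_le_of_ne hθ.2 hθne)]
    have c2 : ∫ θ in Ioc ξ s, (ker B1 B2 s θ * ker N1 N2 θ ξ) i j
        = ∫ θ in Ioc ξ s, (B1 s θ * N1 θ ξ) i j :=
      setIntegral_congr_fun measurableSet_Ioc fun θ hθ => by
        rw [ker_of_le hθ.2, ker_of_le hθ.1.le]
    have c3 : ∫ θ in Ioc s b, (ker B1 B2 s θ * ker N1 N2 θ ξ) i j
        = ∫ θ in Ioc s b, (B2 s θ * N1 θ ξ) i j :=
      setIntegral_congr_fun measurableSet_Ioc fun θ hθ => by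
        rw [ker_of_gt hθ.1, ker_of_le (hξ.2.trans hθ.1.le)]
    rw [hμ, integral_Icc_eq_integral_Ioc, ← Set.Ioc_union_Ioc_eq_Ioc hs.1 hs.2,
      setIntegral_union (Set.Ioc_disjoint_Ioc_of_le le_rfl) measurableSet_Ioc
        (hent.mono_set h1sub) (hent.mono_set h2sub),
      ← Set.Ioc_union_Ioc_eq_Ioc hξ.1.le hξ.2,
      setIntegral_union (Set.Ioc_disjoint_Ioc_of_le le_rfl) measurableSet_Ioc
        (hent.mono_set fun θ hθ => ⟨hθ.1.le, hθ.2.trans hξI.2⟩)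
        (hent.mono_set fun θ hθ => ⟨(hξ.1.trans hθ.1).le, hθ.2.trans hs.2⟩),
      c1, c2, c3, intervalIntegral.integral_of_le hξ.1.le,
      intervalIntegral.integral_of_le hξ.2, intervalIntegral.integral_of_le hs.2]
  have hQ2 : ∀ ξ ∈ Ioc s b, ∀ i j, (∫ θ, (ker B1 B2 s θ * ker N1 N2 θ ξ) i j ∂μ)
      = (∫ θ in a..s, (B1 s θ * N2 θ ξ) i j) + (∫ θ in s..ξ, (B2 s θ * N2 θ ξ) i j)
        + ∫ θ in ξ..b, (B2 s θ * N1 θ ξ) i j := by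
    intro ξ hξ i j
    have hξI : ξ ∈ Icc a b := h2sub hξ
    have hent := hentint ξ hξI i j
    have c1 : ∫ θ in Ioc a s, (ker B1 B2 s θ * ker N1 N2 θ ξ) i j
        = ∫ θ in Ioc a s, (B1 s θ * N2 θ ξ) i j :=
      setIntegral_congr_fun measurableSet_Ioc fun θ hθ => by
        rw [ker_of_le hθ.2, ker_of_gt (hθ.2.trans_lt hξ.1)]
    have c2 : ∫ θ in Ioc s ξ, (ker B1 B2 s θ * ker N1 N2 θ ξ) i j
        = ∫ θ in Ioc s ξ, (B2 s θ * N2 θ ξ) i j := by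
      refine setIntegral_congr_ae measurableSet_Ioc ?_
      filter_upwards [hne ξ] with θ hθne hθ
      rw [ker_of_gt hθ.1, ker_of_gt (lt_of_le_of_ne hθ.2 hθne)]
    have c3 : ∫ θ in Ioc ξ b, (ker B1 B2 s θ * ker N1 N2 θ ξ) i j
        = ∫ θ in Ioc ξ b, (B2 s θ * N1 θ ξ) i j :=
      setIntegral_congr_fun measurableSet_Ioc fun θ hθ => by
        rw [ker_of_gt (hξ.1.trans hθ.1), ker_of_le hθ.1.le]
    rw [hμ, integral_Icc_eq_integral_Ioc, ← Set.Ioc_union_Ioc_eq_Ioc hs.1 hs.2,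
      setIntegral_union (Set.Ioc_disjoint_Ioc_of_le le_rfl) measurableSet_Ioc
        (hent.mono_set h1sub) (hent.mono_set h2sub),
      ← Set.Ioc_union_Ioc_eq_Ioc hξ.1.le hξ.2,
      setIntegral_union (Set.Ioc_disjoint_Ioc_of_le le_rfl) measurableSet_Ioc
        (hent.mono_set fun θ hθ => ⟨hs.1.trans hθ.1.le, hθ.2.trans hξI.2⟩)
        (hent.mono_set fun θ hθ => ⟨hs.1.trans (hξ.1.trans hθ.1).le, hθ.2⟩),
      c1, c2, c3, intervalIntegral.integral_of_le hs.1,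
      intervalIntegral.integral_of_le hξ.1.le, intervalIntegral.integral_of_le hξ.2]
    ring
  -- matching the combined kernel with R1 on (a, s]
  have hEq1 : EqOn
      (fun ξ => (B0 s * ker N1 N2 s ξ + (ker B1 B2 s ξ * N0 ξ
          + Matrix.of fun i j =>
              ∫ θ, (ker B1 B2 s θ * ker N1 N2 θ ξ) i j ∂μ)).mulVec (x ξ))
      (fun ξ => (Matrix.of fun i j =>
          (B0 s * N1 s ξ) i j + (B1 s ξ * N0 ξ) i j +
          (∫ θ in a..ξ, (B1 s θ * N2 θ ξ) i j) +
          (∫ θ in ξ..s, (B1 s θ * N1 θ ξ) i j) +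
          ∫ θ in s..b, (B2 s θ * N1 θ ξ) i j).mulVec (x ξ)) (Ioc a s) := by
    intro ξ hξ
    have hmat : (B0 s * ker N1 N2 s ξ + (ker B1 B2 s ξ * N0 ξ
        + Matrix.of fun i j => ∫ θ, (ker B1 B2 s θ * ker N1 N2 θ ξ) i j ∂μ))
        = Matrix.of fun i j =>
          (B0 s * N1 s ξ) i j + (B1 s ξ * N0 ξ) i j +
          (∫ θ in a..ξ, (B1 s θ * N2 θ ξ) i j) +
          (∫ θ in ξ..s, (B1 s θ * N1 θ ξ) i j) +
          ∫ θ in s..b, (B2 s θ * N1 θ ξ) i j := by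
      rw [ker_of_le (C1 := N1) (C2 := N2) hξ.2, ker_of_le (C1 := B1) (C2 := B2) hξ.2]
      ext i j
      simp only [Matrix.add_apply, Matrix.of_apply]
      rw [hQ1 ξ hξ i j]
      ring
    simp only [hmat]
  -- matching the combined kernel with R2 on (s, b]
  have hEq2 : EqOn
      (fun ξ => (B0 s * ker N1 N2 s ξ + (ker B1 B2 s ξ * N0 ξ
          + Matrix.of fun i j =>
              ∫ θ, (ker B1 B2 s θ * ker N1 N2 θ ξ) i j ∂μ)).mulVec (x ξ))
      (fun ξ => (Matrix.of fun i j =>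
          (B0 s * N2 s ξ) i j + (B2 s ξ * N0 ξ) i j +
          (∫ θ in a..s, (B1 s θ * N2 θ ξ) i j) +
          (∫ θ in s..ξ, (B2 s θ * N2 θ ξ) i j) +
          ∫ θ in ξ..b, (B2 s θ * N1 θ ξ) i j).mulVec (x ξ)) (Ioc s b) := by
    intro ξ hξ
    have hmat : (B0 s * ker N1 N2 s ξ + (ker B1 B2 s ξ * N0 ξ
        + Matrix.of fun i j => ∫ θ, (ker B1 B2 s θ * ker N1 N2 θ ξ) i j ∂μ))
        = Matrix.of fun i j =>
          (B0 s * N2 s ξ) i j + (B2 s ξ * N0 ξ) i j +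
          (∫ θ in a..s, (B1 s θ * N2 θ ξ) i j) +
          (∫ θ in s..ξ, (B2 s θ * N2 θ ξ) i j) +
          ∫ θ in ξ..b, (B2 s θ * N1 θ ξ) i j := by
      rw [ker_of_gt (C1 := N1) (C2 := N2) hξ.1, ker_of_gt (C1 := B1) (C2 := B2) hξ.1]
      ext i j
      simp only [Matrix.add_apply, Matrix.of_apply]
      rw [hQ2 ξ hξ i j]
      ring
    simp only [hmat]
  -- splitting the combined integral
  have hGint' := hGint
  have hEq1' := hEq1
  have hEq2' := hEq2
  rw [hμ] at hGint' hEq1' hEq2'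
  have hsplit : (∫ ξ, (B0 s * ker N1 N2 s ξ + (ker B1 B2 s ξ * N0 ξ
        + Matrix.of fun i j =>
            ∫ θ, (ker B1 B2 s θ * ker N1 N2 θ ξ) i j ∂μ)).mulVec (x ξ) ∂μ)
      = (∫ ξ in Ioc a s, (Matrix.of fun i j =>
            (B0 s * N1 s ξ) i j + (B1 s ξ * N0 ξ) i j +
            (∫ θ in a..ξ, (B1 s θ * N2 θ ξ) i j) +
            (∫ θ in ξ..s, (B1 s θ * N1 θ ξ) i j) +
            ∫ θ in s..b, (B2 s θ * N1 θ ξ) i j).mulVec (x ξ))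
        + ∫ ξ in Ioc s b, (Matrix.of fun i j =>
            (B0 s * N2 s ξ) i j + (B2 s ξ * N0 ξ) i j +
            (∫ θ in a..s, (B1 s θ * N2 θ ξ) i j) +
            (∫ θ in s..ξ, (B2 s θ * N2 θ ξ) i j) +
            ∫ θ in ξ..b, (B2 s θ * N1 θ ξ) i j).mulVec (x ξ) := by
    rw [hμ, integral_Icc_eq_integral_Ioc, ← Set.Ioc_union_Ioc_eq_Ioc hs.1 hs.2,
      setIntegral_union (Set.Ioc_disjoint_Ioc_of_le le_rfl) measurableSet_Ioc
        (IntegrableOn.mono_set hGint' h1sub) (IntegrableOn.mono_set hGint' h2sub),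
      setIntegral_congr_fun measurableSet_Ioc hEq1',
      setIntegral_congr_fun measurableSet_Ioc hEq2']
  -- final assembly
  have hBint' := hBint
  rw [hμ] at hBint'
  rw [PIop_eq B0 B1 B2 (PIop a b N0 N1 N2 x) hs hBint', ← hμ, hT1, hT2, add_assoc,
    ← hG, hsplit]
  simp only [PIop]
  rw [intervalIntegral.integral_of_le hs.1, intervalIntegral.integral_of_le hs.2,
    ← add_assoc]


end
end

section
/- Let a < b, n ∈ ℕ, and let N0 : [a,b] → ℝ^{n×n}, N1, N2 : [a,b]×[a,b] → ℝ^{n×n} be bounded measurable matrix-valued functions. Define N̂0(s) = N0(s)ᵀ, N̂1(s,η) = N2(η,s)ᵀ, and N̂2(s,η) = N1(η,s)ᵀ. Then for all x, y ∈ L²([a,b];ℝⁿ), ⟨P_{N0,N1,N2} x, y⟩_{L²} = ⟨x, P_{N̂0,N̂1,N̂2} y⟩_{L²}, where ⟨u,v⟩_{L²} = ∫ₐᵇ u(s)ᵀ v(s) ds. -/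
open MeasureTheory Set Matrix ENNReal

noncomputable section

namespace Stmt4Aux

/-! ### Generalities -/

lemma mulVec_dot {n : ℕ} (A : Matrix (Fin n) (Fin n) ℝ) (u v : Fin n → ℝ) :
    A.mulVec u ⬝ᵥ v = u ⬝ᵥ Aᵀ.mulVec v := by
  simp only [dotProduct, Matrix.mulVec, Matrix.transpose_apply, Finset.sum_mul,
    Finset.mul_sum]
  rw [Finset.sum_comm]
  exact Finset.sum_congr rfl fun i _ => Finset.sum_congr rfl fun j _ => by ring

/-- The continuous linear map `v ↦ v ⬝ᵥ w`. -/
def dotCLM {n : ℕ} (w : Fin n → ℝ) : (Fin n → ℝ) →L[ℝ] ℝ :=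
  LinearMap.toContinuousLinearMap
    { toFun := fun v => v ⬝ᵥ w
      map_add' := fun u v => add_dotProduct u v w
      map_smul' := fun c v => by simp [smul_dotProduct] }

@[simp] lemma dotCLM_apply {n : ℕ} (w v : Fin n → ℝ) : dotCLM w v = v ⬝ᵥ w := rfl

lemma dot_intervalIntegral {n : ℕ} (w : Fin n → ℝ) (f : ℝ → Fin n → ℝ) {c d : ℝ}
    (h : IntervalIntegrable f volume c d) :
    (∫ θ in c..d, f θ) ⬝ᵥ w = ∫ θ in c..d, f θ ⬝ᵥ w := by
  have := ContinuousLinearMap.intervalIntegral_comp_comm (dotCLM w) h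
  simpa using this.symm

lemma integrable_mul_of_memL2 {α : Type*} [MeasurableSpace α] {μ : Measure α} {f g : α → ℝ}
    (hf : MemLp f 2 μ) (hg : MemLp g 2 μ) : Integrable (fun a => f a * g a) μ := by
  have h : MemLp (f • g) 1 μ := hg.smul hf (hpqr := ⟨by rw [inv_one]; exact ENNReal.inv_two_add_inv_two⟩)
  exact memLp_one_iff_integrable.mp h

lemma abs_mulVec_dot_le {n : ℕ} {M : ℝ} (hM : 0 ≤ M) (A : Matrix (Fin n) (Fin n) ℝ)
    (hA : ∀ i j, |A i j| ≤ M) (u v : Fin n → ℝ) :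
    ‖A.mulVec u ⬝ᵥ v‖ ≤ M * ((∑ i, ‖v i‖) * (∑ j, ‖u j‖)) := by
  have hinner : ∀ i, |∑ j, A i j * u j| ≤ M * ∑ j, ‖u j‖ := by
    intro i
    calc |∑ j, A i j * u j| ≤ ∑ j, |A i j * u j| := Finset.abs_sum_le_sum_abs _ _
      _ ≤ ∑ j, M * ‖u j‖ := by
          refine Finset.sum_le_sum fun j _ => ?_
          rw [abs_mul, Real.norm_eq_abs]
          exact mul_le_mul_of_nonneg_right (hA i j) (abs_nonneg _)
      _ = M * ∑ j, ‖u j‖ := by rw [Finset.mul_sum]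
  rw [Real.norm_eq_abs]
  calc |A.mulVec u ⬝ᵥ v| = |∑ i, (∑ j, A i j * u j) * v i| := by
        simp [dotProduct, Matrix.mulVec]
    _ ≤ ∑ i, |(∑ j, A i j * u j) * v i| := Finset.abs_sum_le_sum_abs _ _
    _ ≤ ∑ i, (M * ∑ j, ‖u j‖) * ‖v i‖ := by
        refine Finset.sum_le_sum fun i _ => ?_
        rw [abs_mul, Real.norm_eq_abs]
        exact mul_le_mul_of_nonneg_right (hinner i) (abs_nonneg _)
    _ = M * ((∑ i, ‖v i‖) * (∑ j, ‖u j‖)) := by rw [← Finset.mul_sum]; ring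

lemma norm_mulVec_le {n : ℕ} {M : ℝ} (hM : 0 ≤ M) (A : Matrix (Fin n) (Fin n) ℝ)
    (hA : ∀ i j, |A i j| ≤ M) (u : Fin n → ℝ) :
    ‖A.mulVec u‖ ≤ M * ∑ j, ‖u j‖ := by
  rw [pi_norm_le_iff_of_nonneg (mul_nonneg hM (Finset.sum_nonneg fun _ _ => norm_nonneg _))]
  intro i
  calc ‖A.mulVec u i‖ = |∑ j, A i j * u j| := by simp [Matrix.mulVec, dotProduct]
    _ ≤ ∑ j, |A i j * u j| := Finset.abs_sum_le_sum_abs _ _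
    _ ≤ ∑ j, M * ‖u j‖ := by
        refine Finset.sum_le_sum fun j _ => ?_
        rw [abs_mul, Real.norm_eq_abs]
        exact mul_le_mul_of_nonneg_right (hA i j) (abs_nonneg _)
    _ = M * ∑ j, ‖u j‖ := by rw [Finset.mul_sum]

section Main

variable {n : ℕ} {a b M : ℝ} {K : ℝ → ℝ → Matrix (Fin n) (Fin n) ℝ}
  {x y : ℝ → Fin n → ℝ}

lemma memL2_comp (hx : MemLp x 2 (volume.restrict (Icc a b))) (j : Fin n) :
    MemLp (fun t => x t j) 2 (volume.restrict (Icc a b)) :=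
  hx.of_le ((continuous_apply j).comp_aestronglyMeasurable hx.1)
    (Filter.Eventually.of_forall fun t => norm_le_pi_norm (x t) j)

lemma memL2_sumnorm (hx : MemLp x 2 (volume.restrict (Icc a b))) :
    MemLp (fun t => ∑ j, ‖x t j‖) 2 (volume.restrict (Icc a b)) :=
  memLp_finset_sum _ fun j _ => (memL2_comp hx j).norm

lemma restr_le : volume.restrict (Ioc a b) ≤ volume.restrict (Icc a b) :=
  Measure.restrict_mono Ioc_subset_Icc_self le_rfl

instance : IsFiniteMeasure (volume.restrict (Ioc a b)) :=
  ⟨by rw [Measure.restrict_apply_univ, Real.volume_Ioc]; exact ENNReal.ofReal_lt_top⟩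

lemma integrable_sumnorm (hx : MemLp x 2 (volume.restrict (Icc a b))) :
    Integrable (fun t => ∑ j, ‖x t j‖) (volume.restrict (Ioc a b)) :=
  memLp_one_iff_integrable.mp
    (((memL2_sumnorm hx).mono_measure restr_le).mono_exponent (by norm_num))

lemma aesm_comp (hx : MemLp x 2 (volume.restrict (Icc a b))) (j : Fin n) :
    AEStronglyMeasurable (fun t => x t j) (volume.restrict (Ioc a b)) :=
  (memL2_comp hx j).1.mono_measure restr_le

/-- Integrability of the `θ`-slice `θ ↦ K s θ ⬝ x θ` on subintervals of `[a,b]`. -/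
lemma sliceInt (hab : a ≤ b) (hM : 0 ≤ M)
    (hKm : ∀ i j, Measurable fun p : ℝ × ℝ => K p.1 p.2 i j)
    (hKb : ∀ s ∈ Icc a b, ∀ θ ∈ Icc a b, ∀ i j, |K s θ i j| ≤ M)
    (hx : MemLp x 2 (volume.restrict (Icc a b)))
    {s : ℝ} (hs : s ∈ Icc a b) {c d : ℝ} (hc : c ∈ Icc a b) (hd : d ∈ Icc a b) :
    IntervalIntegrable (fun θ => (K s θ).mulVec (x θ)) volume c d := by
  rw [intervalIntegrable_iff]
  have hsub : Set.uIoc c d ⊆ Icc a b := uIoc_subset_uIcc.trans (uIcc_subset_Icc hc hd)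
  have hIcc : IntegrableOn (fun θ => (K s θ).mulVec (x θ)) (Icc a b) volume := by
    have hXint : Integrable (fun t => ∑ j, ‖x t j‖) (volume.restrict (Icc a b)) :=
      memLp_one_iff_integrable.mp ((memL2_sumnorm hx).mono_exponent (by norm_num))
    refine Integrable.mono' (hXint.const_mul M) ?_ ?_
    · have hfeq : (fun θ => (K s θ).mulVec (x θ))
          = fun θ => ∑ j, x θ j • (fun i => K s θ i j) := by
        funext θ i
        simp [Matrix.mulVec, dotProduct, Finset.sum_apply, mul_comm]
      rw [hfeq]
      refine Finset.aestronglyMeasurable_fun_sum _ fun j _ => ?_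
      exact (memL2_comp hx j).1.smul
        ((measurable_pi_lambda _ fun i =>
          (hKm i j).comp (measurable_const.prodMk measurable_id)).aestronglyMeasurable)
    · filter_upwards [ae_restrict_mem measurableSet_Icc] with θ hθ
      exact norm_mulVec_le hM _ (hKb s hs θ hθ) _
  exact (hIcc.mono_set hsub)

/-- The lower-triangular indicator kernel function on the square. -/
def Glow (K : ℝ → ℝ → Matrix (Fin n) (Fin n) ℝ) (x y : ℝ → Fin n → ℝ) : ℝ × ℝ → ℝ :=
  {q : ℝ × ℝ | q.2 ≤ q.1}.indicator fun q => (K q.1 q.2).mulVec (x q.2) ⬝ᵥ y q.1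

/-- The upper-triangular indicator kernel function on the square. -/
def Gupp (K : ℝ → ℝ → Matrix (Fin n) (Fin n) ℝ) (x y : ℝ → Fin n → ℝ) : ℝ × ℝ → ℝ :=
  {q : ℝ × ℝ | q.1 < q.2}.indicator fun q => (K q.1 q.2).mulVec (x q.2) ⬝ᵥ y q.1

lemma gAESM (hKm : ∀ i j, Measurable fun p : ℝ × ℝ => K p.1 p.2 i j)
    (hx : MemLp x 2 (volume.restrict (Icc a b)))
    (hy : MemLp y 2 (volume.restrict (Icc a b))) :
    AEStronglyMeasurable (fun p : ℝ × ℝ => (K p.1 p.2).mulVec (x p.2) ⬝ᵥ y p.1)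
      ((volume.restrict (Ioc a b)).prod (volume.restrict (Ioc a b))) := by
  have hxq : ∀ j, AEStronglyMeasurable (fun p : ℝ × ℝ => x p.2 j)
      ((volume.restrict (Ioc a b)).prod (volume.restrict (Ioc a b))) := fun j =>
    (aesm_comp hx j).comp_quasiMeasurePreserving Measure.quasiMeasurePreserving_snd
  have hyq : ∀ i, AEStronglyMeasurable (fun p : ℝ × ℝ => y p.1 i)
      ((volume.restrict (Ioc a b)).prod (volume.restrict (Ioc a b))) := fun i =>
    (aesm_comp hy i).comp_quasiMeasurePreserving Measure.quasiMeasurePreserving_fst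
  have hfeq : (fun p : ℝ × ℝ => (K p.1 p.2).mulVec (x p.2) ⬝ᵥ y p.1)
      = fun p => ∑ i, (∑ j, K p.1 p.2 i j * x p.2 j) * y p.1 i := by
    funext p
    simp [Matrix.mulVec, dotProduct]
  rw [hfeq]
  refine Finset.aestronglyMeasurable_fun_sum _ fun i _ => ?_
  refine AEStronglyMeasurable.mul ?_ (hyq i)
  exact Finset.aestronglyMeasurable_fun_sum _ fun j _ =>
    ((hKm i j).aestronglyMeasurable).mul (hxq j)

lemma gInt (hM : 0 ≤ M)
    (hKm : ∀ i j, Measurable fun p : ℝ × ℝ => K p.1 p.2 i j)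
    (hKb : ∀ s ∈ Icc a b, ∀ θ ∈ Icc a b, ∀ i j, |K s θ i j| ≤ M)
    (hx : MemLp x 2 (volume.restrict (Icc a b)))
    (hy : MemLp y 2 (volume.restrict (Icc a b))) :
    Integrable (fun p : ℝ × ℝ => (K p.1 p.2).mulVec (x p.2) ⬝ᵥ y p.1)
      ((volume.restrict (Ioc a b)).prod (volume.restrict (Ioc a b))) := by
  have hprod : Integrable
      (fun p : ℝ × ℝ => (∑ i, ‖y p.1 i‖) * ∑ j, ‖x p.2 j‖)
      ((volume.restrict (Ioc a b)).prod (volume.restrict (Ioc a b))) :=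
    (integrable_sumnorm hy).mul_prod (integrable_sumnorm hx)
  refine Integrable.mono' (hprod.const_mul M) (gAESM hKm hx hy) ?_
  have hmem : ∀ᵐ p : ℝ × ℝ ∂((volume.restrict (Ioc a b)).prod (volume.restrict (Ioc a b))),
      p ∈ Ioc a b ×ˢ Ioc a b := by
    rw [Measure.prod_restrict]
    exact ae_restrict_mem (measurableSet_Ioc.prod measurableSet_Ioc)
  filter_upwards [hmem] with p hp
  exact abs_mulVec_dot_le hM _ (hKb p.1 (Ioc_subset_Icc_self hp.1) p.2
    (Ioc_subset_Icc_self hp.2)) _ _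

lemma GlowInt (hM : 0 ≤ M)
    (hKm : ∀ i j, Measurable fun p : ℝ × ℝ => K p.1 p.2 i j)
    (hKb : ∀ s ∈ Icc a b, ∀ θ ∈ Icc a b, ∀ i j, |K s θ i j| ≤ M)
    (hx : MemLp x 2 (volume.restrict (Icc a b)))
    (hy : MemLp y 2 (volume.restrict (Icc a b))) :
    Integrable (Glow K x y)
      ((volume.restrict (Ioc a b)).prod (volume.restrict (Ioc a b))) :=
  (gInt hM hKm hKb hx hy).indicator (measurableSet_le measurable_snd measurable_fst)

lemma GuppInt (hM : 0 ≤ M)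
    (hKm : ∀ i j, Measurable fun p : ℝ × ℝ => K p.1 p.2 i j)
    (hKb : ∀ s ∈ Icc a b, ∀ θ ∈ Icc a b, ∀ i j, |K s θ i j| ≤ M)
    (hx : MemLp x 2 (volume.restrict (Icc a b)))
    (hy : MemLp y 2 (volume.restrict (Icc a b))) :
    Integrable (Gupp K x y)
      ((volume.restrict (Ioc a b)).prod (volume.restrict (Ioc a b))) :=
  (gInt hM hKm hKb hx hy).indicator (measurableSet_lt measurable_fst measurable_snd)

/-- Pointwise identification of the inner integral: lower-triangular case. -/
lemma convLow (hab : a ≤ b) (hM : 0 ≤ M)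
    (hKm : ∀ i j, Measurable fun p : ℝ × ℝ => K p.1 p.2 i j)
    (hKb : ∀ s ∈ Icc a b, ∀ θ ∈ Icc a b, ∀ i j, |K s θ i j| ≤ M)
    (hx : MemLp x 2 (volume.restrict (Icc a b)))
    {s : ℝ} (hs : s ∈ Icc a b) :
    (∫ θ in a..s, (K s θ).mulVec (x θ)) ⬝ᵥ y s
      = ∫ θ, Glow K x y (s, θ) ∂(volume.restrict (Ioc a b)) := by
  rw [dot_intervalIntegral _ _
    (sliceInt hab hM hKm hKb hx hs (left_mem_Icc.mpr hab) hs),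
    intervalIntegral.integral_of_le hs.1]
  have h2 : (fun θ => Glow K x y (s, θ))
      = (Iic s).indicator (fun θ => (K s θ).mulVec (x θ) ⬝ᵥ y s) := by
    funext θ
    by_cases h : θ ≤ s <;> simp [Glow, Set.indicator_apply, h]
  rw [h2, integral_indicator measurableSet_Iic,
    Measure.restrict_restrict measurableSet_Iic]
  congr 1
  rw [show Iic s ∩ Ioc a b = Ioc a s from ?_]
  ext t
  simp only [mem_inter_iff, mem_Iic, mem_Ioc]
  constructor
  · rintro ⟨h1, h2, _⟩; exact ⟨h2, h1⟩
  · rintro ⟨h1, h2⟩; exact ⟨h2, h1, h2.trans hs.2⟩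

/-- Pointwise identification of the inner integral: upper-triangular case. -/
lemma convUpp (hab : a ≤ b) (hM : 0 ≤ M)
    (hKm : ∀ i j, Measurable fun p : ℝ × ℝ => K p.1 p.2 i j)
    (hKb : ∀ s ∈ Icc a b, ∀ θ ∈ Icc a b, ∀ i j, |K s θ i j| ≤ M)
    (hx : MemLp x 2 (volume.restrict (Icc a b)))
    {s : ℝ} (hs : s ∈ Icc a b) :
    (∫ θ in s..b, (K s θ).mulVec (x θ)) ⬝ᵥ y s
      = ∫ θ, Gupp K x y (s, θ) ∂(volume.restrict (Ioc a b)) := by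
  rw [dot_intervalIntegral _ _
    (sliceInt hab hM hKm hKb hx hs hs (right_mem_Icc.mpr hab)),
    intervalIntegral.integral_of_le hs.2]
  have h2 : (fun θ => Gupp K x y (s, θ))
      = (Ioi s).indicator (fun θ => (K s θ).mulVec (x θ) ⬝ᵥ y s) := by
    funext θ
    by_cases h : s < θ <;> simp [Gupp, Set.indicator_apply, h]
  rw [h2, integral_indicator measurableSet_Ioi,
    Measure.restrict_restrict measurableSet_Ioi]
  congr 1
  rw [show Ioi s ∩ Ioc a b = Ioc s b from ?_]
  ext t
  simp only [mem_inter_iff, mem_Ioi, mem_Ioc]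
  constructor
  · rintro ⟨h1, _, h3⟩; exact ⟨h1, h3⟩
  · rintro ⟨h1, h2⟩; exact ⟨h1, hs.1.trans_lt h1, h2⟩

/-- Identification of the swapped inner integral (lower-triangular case). -/
lemma convSwapLow (hab : a ≤ b) (hM : 0 ≤ M)
    (hKm : ∀ i j, Measurable fun p : ℝ × ℝ => K p.1 p.2 i j)
    (hKb : ∀ s ∈ Icc a b, ∀ θ ∈ Icc a b, ∀ i j, |K s θ i j| ≤ M)
    (hy : MemLp y 2 (volume.restrict (Icc a b)))
    {θ : ℝ} (hθ : θ ∈ Ioc a b) :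
    ∫ s, Glow K x y (s, θ) ∂(volume.restrict (Ioc a b))
      = x θ ⬝ᵥ ∫ η in θ..b, ((K η θ)ᵀ).mulVec (y η) := by
  have hθ' : θ ∈ Icc a b := Ioc_subset_Icc_self hθ
  have h2 : (fun s => Glow K x y (s, θ))
      = (Ici θ).indicator (fun s => (K s θ).mulVec (x θ) ⬝ᵥ y s) := by
    funext s
    by_cases h : θ ≤ s <;> simp [Glow, Set.indicator_apply, h]
  rw [h2, integral_indicator measurableSet_Ici,
    Measure.restrict_restrict measurableSet_Ici,
    show Ici θ ∩ Ioc a b = Icc θ b from ?_]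
  · rw [integral_Icc_eq_integral_Ioc, ← intervalIntegral.integral_of_le hθ'.2]
    have h3 : (fun s => (K s θ).mulVec (x θ) ⬝ᵥ y s)
        = fun s => ((K s θ)ᵀ).mulVec (y s) ⬝ᵥ x θ := by
      funext s
      rw [mulVec_dot, dotProduct_comm]
    rw [h3]
    have hslice : IntervalIntegrable (fun η => ((K η θ)ᵀ).mulVec (y η)) volume θ b := by
      have := sliceInt (K := fun u v => (K v u)ᵀ) hab hM
        (fun i j => (hKm j i).comp measurable_swap)
        (fun s hs t ht i j => hKb t ht s hs j i) hy hθ' hθ' (right_mem_Icc.mpr hab)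
      exact this
    rw [← dot_intervalIntegral _ _ hslice, dotProduct_comm]
  · ext t
    simp only [mem_inter_iff, mem_Ici, mem_Ioc, mem_Icc]
    constructor
    · rintro ⟨h1, _, h3⟩; exact ⟨h1, h3⟩
    · rintro ⟨h1, h2⟩; exact ⟨h1, hθ.1.trans_le h1, h2⟩

/-- Interval integrability of the lower-triangular nested term. -/
lemma lemLow (hab : a ≤ b) (hM : 0 ≤ M)
    (hKm : ∀ i j, Measurable fun p : ℝ × ℝ => K p.1 p.2 i j)
    (hKb : ∀ s ∈ Icc a b, ∀ θ ∈ Icc a b, ∀ i j, |K s θ i j| ≤ M)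
    (hx : MemLp x 2 (volume.restrict (Icc a b)))
    (hy : MemLp y 2 (volume.restrict (Icc a b))) :
    IntervalIntegrable (fun s => (∫ θ in a..s, (K s θ).mulVec (x θ)) ⬝ᵥ y s) volume a b := by
  rw [intervalIntegrable_iff_integrableOn_Ioc_of_le hab]
  have h : Integrable (fun s => ∫ θ, Glow K x y (s, θ) ∂(volume.restrict (Ioc a b)))
      (volume.restrict (Ioc a b)) := (GlowInt hM hKm hKb hx hy).integral_prod_left
  refine h.congr ?_
  filter_upwards [ae_restrict_mem measurableSet_Ioc] with s hs
  exact (convLow hab hM hKm hKb hx (Ioc_subset_Icc_self hs)).symm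

/-- Interval integrability of the upper-triangular nested term. -/
lemma lemUpp (hab : a ≤ b) (hM : 0 ≤ M)
    (hKm : ∀ i j, Measurable fun p : ℝ × ℝ => K p.1 p.2 i j)
    (hKb : ∀ s ∈ Icc a b, ∀ θ ∈ Icc a b, ∀ i j, |K s θ i j| ≤ M)
    (hx : MemLp x 2 (volume.restrict (Icc a b)))
    (hy : MemLp y 2 (volume.restrict (Icc a b))) :
    IntervalIntegrable (fun s => (∫ θ in s..b, (K s θ).mulVec (x θ)) ⬝ᵥ y s) volume a b := by
  rw [intervalIntegrable_iff_integrableOn_Ioc_of_le hab]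
  have h : Integrable (fun s => ∫ θ, Gupp K x y (s, θ) ∂(volume.restrict (Ioc a b)))
      (volume.restrict (Ioc a b)) := (GuppInt hM hKm hKb hx hy).integral_prod_left
  refine h.congr ?_
  filter_upwards [ae_restrict_mem measurableSet_Ioc] with s hs
  exact (convUpp hab hM hKm hKb hx (Ioc_subset_Icc_self hs)).symm

/-- The main Fubini-type adjoint identity for the below-diagonal kernel. -/
lemma partA (hab : a ≤ b) (hM : 0 ≤ M)
    (hKm : ∀ i j, Measurable fun p : ℝ × ℝ => K p.1 p.2 i j)
    (hKb : ∀ s ∈ Icc a b, ∀ θ ∈ Icc a b, ∀ i j, |K s θ i j| ≤ M)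
    (hx : MemLp x 2 (volume.restrict (Icc a b)))
    (hy : MemLp y 2 (volume.restrict (Icc a b))) :
    ∫ s in a..b, (∫ θ in a..s, (K s θ).mulVec (x θ)) ⬝ᵥ y s
      = ∫ s in a..b, x s ⬝ᵥ ∫ η in s..b, ((K η s)ᵀ).mulVec (y η) := by
  have hG : Integrable (Function.uncurry fun s θ => Glow K x y (s, θ))
      ((volume.restrict (Ioc a b)).prod (volume.restrict (Ioc a b))) :=
    GlowInt hM hKm hKb hx hy
  calc ∫ s in a..b, (∫ θ in a..s, (K s θ).mulVec (x θ)) ⬝ᵥ y s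
      = ∫ s in Ioc a b, ∫ θ, Glow K x y (s, θ) ∂(volume.restrict (Ioc a b)) := by
        rw [intervalIntegral.integral_of_le hab]
        refine setIntegral_congr_fun measurableSet_Ioc fun s hs => ?_
        exact convLow hab hM hKm hKb hx (Ioc_subset_Icc_self hs)
    _ = ∫ θ, ∫ s, Glow K x y (s, θ) ∂(volume.restrict (Ioc a b))
          ∂(volume.restrict (Ioc a b)) := integral_integral_swap hG
    _ = ∫ s in a..b, x s ⬝ᵥ ∫ η in s..b, ((K η s)ᵀ).mulVec (y η) := by
        rw [intervalIntegral.integral_of_le hab]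
        refine setIntegral_congr_fun measurableSet_Ioc fun θ hθ => ?_
        exact convSwapLow hab hM hKm hKb hy hθ

end Main

end Stmt4Aux

open Stmt4Aux in
/-- the L²-adjoint of a 3-PI operator is the 3-PI operator with
parameters N̂0(s) = N0(s)ᵀ, N̂1(s,η) = N2(η,s)ᵀ, N̂2(s,η) = N1(η,s)ᵀ. -/
theorem stmt4 (a b : ℝ) (hab : a < b) (n : ℕ)
    (N0 : ℝ → Matrix (Fin n) (Fin n) ℝ) (N1 N2 : ℝ → ℝ → Matrix (Fin n) (Fin n) ℝ)
    (hN0m : ∀ i j, Measurable fun s => N0 s i j)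
    (hN1m : ∀ i j, Measurable fun p : ℝ × ℝ => N1 p.1 p.2 i j)
    (hN2m : ∀ i j, Measurable fun p : ℝ × ℝ => N2 p.1 p.2 i j)
    (M : ℝ)
    (hN0b : ∀ s ∈ Icc a b, ∀ i j, |N0 s i j| ≤ M)
    (hN1b : ∀ s ∈ Icc a b, ∀ θ ∈ Icc a b, ∀ i j, |N1 s θ i j| ≤ M)
    (hN2b : ∀ s ∈ Icc a b, ∀ θ ∈ Icc a b, ∀ i j, |N2 s θ i j| ≤ M)
    (x y : ℝ → Fin n → ℝ)
    (hx : MemLp x 2 (volume.restrict (Icc a b)))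
    (hy : MemLp y 2 (volume.restrict (Icc a b))) :
    ∫ s in a..b, (PIop a b N0 N1 N2 x s) ⬝ᵥ y s =
      ∫ s in a..b, x s ⬝ᵥ
        (PIop a b (fun s => (N0 s)ᵀ) (fun s η => (N2 η s)ᵀ) (fun s η => (N1 η s)ᵀ) y s) := by
  have hab' : a ≤ b := hab.le
  have hM : (0 : ℝ) ≤ |M| := abs_nonneg M
  have hN0b' : ∀ s ∈ Icc a b, ∀ i j, |N0 s i j| ≤ |M| :=
    fun s hs i j => (hN0b s hs i j).trans (le_abs_self M)
  have hN1b' : ∀ s ∈ Icc a b, ∀ θ ∈ Icc a b, ∀ i j, |N1 s θ i j| ≤ |M| :=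
    fun s hs θ hθ i j => (hN1b s hs θ hθ i j).trans (le_abs_self M)
  have hN2b' : ∀ s ∈ Icc a b, ∀ θ ∈ Icc a b, ∀ i j, |N2 s θ i j| ≤ |M| :=
    fun s hs θ hθ i j => (hN2b s hs θ hθ i j).trans (le_abs_self M)
  -- Integrability of the multiplier term.
  have hI0 : IntervalIntegrable (fun s => (N0 s).mulVec (x s) ⬝ᵥ y s) volume a b := by
    rw [intervalIntegrable_iff_integrableOn_Ioc_of_le hab']
    have hprodint : Integrable
        (fun s => (∑ i, ‖y s i‖) * ∑ j, ‖x s j‖) (volume.restrict (Ioc a b)) :=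
      integrable_mul_of_memL2 ((memL2_sumnorm hy).mono_measure restr_le)
        ((memL2_sumnorm hx).mono_measure restr_le)
    refine Integrable.mono' (hprodint.const_mul |M|) ?_ ?_
    · have hfeq : (fun s => (N0 s).mulVec (x s) ⬝ᵥ y s)
          = fun s => ∑ i, (∑ j, N0 s i j * x s j) * y s i := by
        funext s; simp [Matrix.mulVec, dotProduct]
      rw [hfeq]
      refine Finset.aestronglyMeasurable_fun_sum _ fun i _ => ?_
      refine AEStronglyMeasurable.mul ?_ (aesm_comp hy i)
      exact Finset.aestronglyMeasurable_fun_sum _ fun j _ =>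
        ((hN0m i j).aestronglyMeasurable).mul (aesm_comp hx j)
    · filter_upwards [ae_restrict_mem measurableSet_Ioc] with s hs
      exact abs_mulVec_dot_le hM _ (hN0b' s (Ioc_subset_Icc_self hs)) _ _
  have hI1 : IntervalIntegrable
      (fun s => (∫ θ in a..s, (N1 s θ).mulVec (x θ)) ⬝ᵥ y s) volume a b :=
    lemLow hab' hM hN1m hN1b' hx hy
  have hI2 : IntervalIntegrable
      (fun s => (∫ θ in s..b, (N2 s θ).mulVec (x θ)) ⬝ᵥ y s) volume a b :=
    lemUpp hab' hM hN2m hN2b' hx hy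
  -- RHS component integrability, via pointwise rewriting.
  have hJ0 : IntervalIntegrable (fun s => x s ⬝ᵥ (N0 s)ᵀ.mulVec (y s)) volume a b := by
    have he : (fun s => x s ⬝ᵥ (N0 s)ᵀ.mulVec (y s))
        = fun s => (N0 s).mulVec (x s) ⬝ᵥ y s :=
      funext fun s => (mulVec_dot _ _ _).symm
    rw [he]; exact hI0
  have hJ1 : IntervalIntegrable
      (fun s => x s ⬝ᵥ ∫ η in a..s, ((N2 η s)ᵀ).mulVec (y η)) volume a b := by
    have h := lemLow (K := fun u v => (N2 v u)ᵀ) hab' hM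
      (fun i j => (hN2m j i).comp measurable_swap)
      (fun s hs θ hθ i j => hN2b' θ hθ s hs j i) hy hx
    have he : (fun s => x s ⬝ᵥ ∫ η in a..s, ((N2 η s)ᵀ).mulVec (y η))
        = fun s => (∫ θ in a..s, ((N2 θ s)ᵀ).mulVec (y θ)) ⬝ᵥ x s :=
      funext fun s => dotProduct_comm _ _
    rw [he]; exact h
  have hJ2 : IntervalIntegrable
      (fun s => x s ⬝ᵥ ∫ η in s..b, ((N1 η s)ᵀ).mulVec (y η)) volume a b := by
    have h := lemUpp (K := fun u v => (N1 v u)ᵀ) hab' hM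
      (fun i j => (hN1m j i).comp measurable_swap)
      (fun s hs θ hθ i j => hN1b' θ hθ s hs j i) hy hx
    have he : (fun s => x s ⬝ᵥ ∫ η in s..b, ((N1 η s)ᵀ).mulVec (y η))
        = fun s => (∫ θ in s..b, ((N1 θ s)ᵀ).mulVec (y θ)) ⬝ᵥ x s :=
      funext fun s => dotProduct_comm _ _
    rw [he]; exact h
  -- The three pieces.
  have e0 : ∫ s in a..b, (N0 s).mulVec (x s) ⬝ᵥ y s
      = ∫ s in a..b, x s ⬝ᵥ (N0 s)ᵀ.mulVec (y s) :=
    intervalIntegral.integral_congr fun s _ => mulVec_dot _ _ _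
  have e1 : ∫ s in a..b, (∫ θ in a..s, (N1 s θ).mulVec (x θ)) ⬝ᵥ y s
      = ∫ s in a..b, x s ⬝ᵥ ∫ η in s..b, ((N1 η s)ᵀ).mulVec (y η) :=
    partA hab' hM hN1m hN1b' hx hy
  have e2 : ∫ s in a..b, (∫ θ in s..b, (N2 s θ).mulVec (x θ)) ⬝ᵥ y s
      = ∫ s in a..b, x s ⬝ᵥ ∫ η in a..s, ((N2 η s)ᵀ).mulVec (y η) := by
    have h := partA (K := fun u v => (N2 v u)ᵀ) (x := y) (y := x) hab' hM
      (fun i j => (hN2m j i).comp measurable_swap)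
      (fun s hs θ hθ i j => hN2b' θ hθ s hs j i) hy hx
    -- h : ∫ s, (∫ θ in a..s, (N2 θ s)ᵀ.mulVec (y θ)) ⬝ᵥ x s
    --      = ∫ s, y s ⬝ᵥ ∫ η in s..b, ((N2 s η)ᵀᵀ).mulVec (x η)
    have hL : ∫ s in a..b, (∫ θ in a..s, ((N2 θ s)ᵀ).mulVec (y θ)) ⬝ᵥ x s
        = ∫ s in a..b, x s ⬝ᵥ ∫ η in a..s, ((N2 η s)ᵀ).mulVec (y η) :=
      intervalIntegral.integral_congr fun s _ => dotProduct_comm _ _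
    have hR : ∫ s in a..b, y s ⬝ᵥ ∫ η in s..b, (((fun u v => (N2 v u)ᵀ) η s)ᵀ).mulVec (x η)
        = ∫ s in a..b, (∫ θ in s..b, (N2 s θ).mulVec (x θ)) ⬝ᵥ y s := by
      refine intervalIntegral.integral_congr fun s _ => ?_
      rw [dotProduct_comm]
      congr 1
    rw [← hR, ← h, hL]
  -- Assemble.
  calc ∫ s in a..b, (PIop a b N0 N1 N2 x s) ⬝ᵥ y s
      = (∫ s in a..b, (N0 s).mulVec (x s) ⬝ᵥ y s)
        + (∫ s in a..b, (∫ θ in a..s, (N1 s θ).mulVec (x θ)) ⬝ᵥ y s)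
        + ∫ s in a..b, (∫ θ in s..b, (N2 s θ).mulVec (x θ)) ⬝ᵥ y s := by
        simp only [PIop, add_dotProduct]
        rw [intervalIntegral.integral_add (hI0.add hI1) hI2,
          intervalIntegral.integral_add hI0 hI1]
    _ = (∫ s in a..b, x s ⬝ᵥ (N0 s)ᵀ.mulVec (y s))
        + (∫ s in a..b, x s ⬝ᵥ ∫ η in a..s, ((N2 η s)ᵀ).mulVec (y η))
        + ∫ s in a..b, x s ⬝ᵥ ∫ η in s..b, ((N1 η s)ᵀ).mulVec (y η) := by
        rw [e0, e1, e2]; ring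
    _ = ∫ s in a..b, x s ⬝ᵥ
        (PIop a b (fun s => (N0 s)ᵀ) (fun s η => (N2 η s)ᵀ) (fun s η => (N1 η s)ᵀ) y s) := by
        simp only [PIop, dotProduct_add]
        rw [intervalIntegral.integral_add (hJ0.add hJ1) hJ2,
          intervalIntegral.integral_add hJ0 hJ1]

end
end

section
/- Let H be a real Hilbert space and let 𝒯, 𝒜, 𝒫 be bounded linear operators on H. Suppose 𝒫 is self-adjoint, there exists α > 0 with ⟨x, 𝒫x⟩ ≥ α‖x‖² for all x ∈ H, and there exists δ > 0 such that ⟨𝒜x, 𝒫𝒯x⟩ + ⟨𝒯x, 𝒫𝒜x⟩ ≤ −δ‖𝒯x‖² for all x ∈ H. Let ζ = ‖𝒫‖ (operator norm). Let x : [0,∞) → H be differentiable with 𝒯 x'(t) = 𝒜 x(t) for all t ≥ 0. Then for all t ≥ 0, ‖𝒯 x(t)‖² ≤ (ζ/α) ‖𝒯 x(0)‖² e^{−(δ/ζ) t}. -/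
open Set RealInnerProductSpace

/-- Lyapunov stability for PIEs 𝒯ẋ = 𝒜x on a real Hilbert space:
if 𝒫 is self-adjoint, coercive (⟨x,𝒫x⟩ ≥ α‖x‖²) and the dissipation inequality
⟨𝒜x,𝒫𝒯x⟩ + ⟨𝒯x,𝒫𝒜x⟩ ≤ -δ‖𝒯x‖² holds, then along any differentiable solution,
‖𝒯x(t)‖² ≤ (ζ/α)‖𝒯x(0)‖² e^{-(δ/ζ)t} where ζ = ‖𝒫‖. -/
theorem stmt13 {H : Type*} [NormedAddCommGroup H] [InnerProductSpace ℝ H]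
    [CompleteSpace H]
    (T A P : H →L[ℝ] H)
    (hPsa : ∀ x y : H, ⟪P x, y⟫ = ⟪x, P y⟫)
    (α : ℝ) (hα : 0 < α) (hcoer : ∀ x : H, α * ‖x‖ ^ 2 ≤ ⟪x, P x⟫)
    (δ : ℝ) (hδ : 0 < δ)
    (hdiss : ∀ x : H, ⟪A x, P (T x)⟫ + ⟪T x, P (A x)⟫ ≤ -δ * ‖T x‖ ^ 2)
    (ζ : ℝ) (hζ : ζ = ‖P‖)
    (x x' : ℝ → H)
    (hx : ∀ t, 0 ≤ t → HasDerivWithinAt x (x' t) (Ici 0) t)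
    (hPIE : ∀ t, 0 ≤ t → T (x' t) = A (x t)) :
    ∀ t, 0 ≤ t →
      ‖T (x t)‖ ^ 2 ≤ ζ / α * ‖T (x 0)‖ ^ 2 * Real.exp (-(δ / ζ) * t) := by
  intro t ht
  rcases eq_or_lt_of_le (hζ ▸ norm_nonneg P) with h0 | hζpos
  · -- degenerate case ζ = 0 : then P = 0 and coercivity forces H = 0
    have hP0 : P = 0 := by
      have := h0.symm
      rwa [hζ, norm_eq_zero] at this
    have hzero : ∀ y : H, y = 0 := by
      intro y
      have := hcoer y
      rw [hP0] at this
      simp only [ContinuousLinearMap.zero_apply, inner_zero_right] at this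
      have h1 : ‖y‖ ^ 2 ≤ 0 := by nlinarith
      have h2 : ‖y‖ ≤ 0 := by nlinarith [norm_nonneg y]
      exact norm_eq_zero.mp (le_antisymm h2 (norm_nonneg y))
    rw [hzero (T (x t)), hzero (T (x 0))]
    simp [Real.exp_nonneg]
  · -- main case ζ > 0
    set K : ℝ := δ / ζ with hK
    have hKpos : 0 < K := div_pos hδ hζpos
    set V : ℝ → ℝ := fun t => ⟪T (x t), P (T (x t))⟫ with hV
    set g : ℝ → ℝ := fun t => V t * Real.exp (K * t) with hg
    -- upper bound V s ≤ ζ * ‖T (x s)‖ ^ 2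
    have hVub : ∀ y : H, ⟪y, P y⟫ ≤ ζ * ‖y‖ ^ 2 := by
      intro y
      calc ⟪y, P y⟫ ≤ ‖y‖ * ‖P y‖ := real_inner_le_norm _ _
        _ ≤ ‖y‖ * (‖P‖ * ‖y‖) := by
            exact mul_le_mul_of_nonneg_left (P.le_opNorm y) (norm_nonneg y)
        _ = ζ * ‖y‖ ^ 2 := by rw [hζ]; ring
    -- derivative of g
    have hgder : ∀ s ∈ Ici (0:ℝ), HasDerivWithinAt g
        (((⟪T (x s), P (A (x s))⟫ + ⟪A (x s), P (T (x s))⟫) + V s * K) * Real.exp (K * s))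
        (Ici 0) s := by
      intro s hs
      have hs' : (0:ℝ) ≤ s := hs
      have hy : HasDerivWithinAt (fun t => T (x t)) (A (x s)) (Ici 0) s := by
        have := (T.hasFDerivAt (x := x s)).comp_hasDerivWithinAt s (hx s hs')
        rwa [hPIE s hs'] at this
      have hPy : HasDerivWithinAt (fun t => P (T (x t))) (P (A (x s))) (Ici 0) s :=
        (P.hasFDerivAt (x := T (x s))).comp_hasDerivWithinAt s hy
      have hVd : HasDerivWithinAt V
          (⟪T (x s), P (A (x s))⟫ + ⟪A (x s), P (T (x s))⟫) (Ici 0) s :=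
        hy.inner ℝ hPy
      have hE : HasDerivAt (fun t => Real.exp (K * t)) (Real.exp (K * s) * K) s := by
        have h1 : HasDerivAt (fun t : ℝ => K * t) K s := by
          simpa using (hasDerivAt_id s).const_mul K
        simpa using h1.exp
      have := hVd.mul hE.hasDerivWithinAt
      refine this.congr_deriv ?_
      ring
    -- g is antitone on Ici 0
    have hganti : AntitoneOn g (Ici 0) := by
      apply antitoneOn_of_hasDerivWithinAt_nonpos (convex_Ici 0)
        (f' := fun s => ((⟪T (x s), P (A (x s))⟫ + ⟪A (x s), P (T (x s))⟫) + V s * K)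
          * Real.exp (K * s))
      · exact fun s hs => (hgder s hs).continuousWithinAt
      · intro s hs
        rw [interior_Ici] at hs ⊢
        exact (hgder s (Ioi_subset_Ici_self hs)).mono Ioi_subset_Ici_self
      · intro s hs
        rw [interior_Ici] at hs
        have h1 : ⟪T (x s), P (A (x s))⟫ + ⟪A (x s), P (T (x s))⟫ ≤ -δ * ‖T (x s)‖ ^ 2 := by
          have := hdiss (x s)
          linarith
        have h2 : V s * K ≤ δ * ‖T (x s)‖ ^ 2 := by
          have hVle : V s ≤ ζ * ‖T (x s)‖ ^ 2 := hVub _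
          calc V s * K ≤ (ζ * ‖T (x s)‖ ^ 2) * K := by
                exact mul_le_mul_of_nonneg_right hVle hKpos.le
            _ = δ * ‖T (x s)‖ ^ 2 := by
                rw [hK]
                field_simp
        apply mul_nonpos_of_nonpos_of_nonneg
        · linarith
        · exact (Real.exp_pos _).le
    have hgt : g t ≤ g 0 := hganti (Set.mem_Ici.mpr le_rfl) ht ht
    -- unfold
    have hV0 : V 0 ≤ ζ * ‖T (x 0)‖ ^ 2 := hVub _
    have hVt : α * ‖T (x t)‖ ^ 2 ≤ V t := hcoer _
    have hexp : (0:ℝ) < Real.exp (K * t) := Real.exp_pos _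
    have hVtle : V t ≤ ζ * ‖T (x 0)‖ ^ 2 * Real.exp (-(K) * t) := by
      have : V t * Real.exp (K * t) ≤ V 0 * Real.exp (K * 0) := hgt
      rw [mul_zero, Real.exp_zero, mul_one] at this
      have h2 : V t * Real.exp (K * t) ≤ ζ * ‖T (x 0)‖ ^ 2 := le_trans this hV0
      rw [neg_mul, Real.exp_neg, ← div_eq_mul_inv, le_div_iff₀ hexp]
      exact h2
    have : α * ‖T (x t)‖ ^ 2 ≤ ζ * ‖T (x 0)‖ ^ 2 * Real.exp (-(K) * t) :=
      le_trans hVt hVtle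
    rw [div_mul_eq_mul_div, div_mul_eq_mul_div, le_div_iff₀ hα]
    calc ‖T (x t)‖ ^ 2 * α = α * ‖T (x t)‖ ^ 2 := by ring
      _ ≤ ζ * ‖T (x 0)‖ ^ 2 * Real.exp (-(K) * t) := this
      _ = ζ * ‖T (x 0)‖ ^ 2 * Real.exp (-(δ / ζ) * t) := by rw [hK]
end

section
/- Let n, m, p ∈ ℕ, let M ∈ ℝ^{n×n} be symmetric and positive definite, let A0 ∈ ℝ^{n×n}, A1 ∈ ℝ^{n×m}, A2 ∈ ℝ^{n×p}, and suppose A1 ≠ 0 or A2 ≠ 0. Then the symmetric block matrix D = [[A0ᵀM + MA0, MA1, MA2], [A1ᵀM, 0, 0], [A2ᵀM, 0, 0]] ∈ ℝ^{(n+m+p)×(n+m+p)} is not negative semidefinite. -/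
open Matrix

lemma quad_aux (a c : ℝ) (hc : 0 ≤ c) (h : ∀ t : ℝ, a * t ^ 2 + 2 * c * t ≤ 0) :
    c = 0 := by
  by_contra hc0
  have hcpos : 0 < c := lt_of_le_of_ne hc (Ne.symm hc0)
  set t := c / (|a| + 1) with htdef
  have ht : (0:ℝ) < t := by positivity
  have := h t
  have htc : t * (|a| + 1) = c := div_mul_cancel₀ c (by positivity)
  nlinarith [abs_nonneg a, neg_abs_le a, le_abs_self a, sq_nonneg t, mul_pos ht ht]

lemma key_aux {k : Type*} [Fintype k] [DecidableEq k] {n : ℕ}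
    (M S : Matrix (Fin n) (Fin n) ℝ) (hM : M.PosDef)
    (A : Matrix (Fin n) k ℝ)
    (h : ∀ (t : ℝ) (y : k → ℝ),
      ((A *ᵥ y) ⬝ᵥ S *ᵥ (A *ᵥ y)) * t ^ 2 + 2 * ((A *ᵥ y) ⬝ᵥ M *ᵥ (A *ᵥ y)) * t ≤ 0) :
    A = 0 := by
  have hz : ∀ y : k → ℝ, A *ᵥ y = 0 := by
    intro y
    set u := A *ᵥ y with hu
    have hc0 : 0 ≤ u ⬝ᵥ M *ᵥ u := by simpa using hM.posSemidef.dotProduct_mulVec_nonneg u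
    have hc : u ⬝ᵥ M *ᵥ u = 0 := quad_aux _ _ hc0 (fun t => h t y)
    by_contra hne
    have := hM.dotProduct_mulVec_pos hne
    rw [star_trivial] at this
    linarith
  ext i j
  simpa using congrFun (hz (Pi.single j 1)) i

/-- for M symmetric positive definite and (A1, A2) ≠ (0, 0), the block
matrix D = [[A0ᵀM + MA0, MA1, MA2], [A1ᵀM, 0, 0], [A2ᵀM, 0, 0]] is not negative
semidefinite (i.e. it is not true that vᵀDv ≤ 0 for all v). -/
theorem stmt15 (n m p : ℕ) (M A0 : Matrix (Fin n) (Fin n) ℝ) (hM : M.PosDef)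
    (A1 : Matrix (Fin n) (Fin m) ℝ) (A2 : Matrix (Fin n) (Fin p) ℝ)
    (hA : A1 ≠ 0 ∨ A2 ≠ 0) :
    ¬ ∀ v : Fin n ⊕ (Fin m ⊕ Fin p) → ℝ,
        v ⬝ᵥ (Matrix.fromBlocks (A0ᵀ * M + M * A0)
            (Matrix.fromCols (M * A1) (M * A2))
            (Matrix.fromRows (A1ᵀ * M) (A2ᵀ * M)) 0).mulVec v ≤ 0 := by
  intro h
  set S := A0ᵀ * M + M * A0 with hS
  have hMsymm : Mᵀ = M := hM.1
  -- A1 = 0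
  have hA1 : A1 = 0 := by
    apply key_aux M S hM
    intro t y
    have := h (Sum.elim (t • (A1 *ᵥ y)) (Sum.elim y 0))
    set u := A1 *ᵥ y with hu
    simp only [fromBlocks_mulVec, Sum.elim_comp_inl, Sum.elim_comp_inr,
      fromCols_mulVec_sumElim, fromRows_mulVec, sumElim_dotProduct_sumElim,
      mulVec_zero, zero_mulVec, add_zero, zero_add, Pi.add_apply, Sum.elim_inl,
      Sum.elim_inr, Pi.zero_apply, zero_dotProduct, dotProduct_add,
      dotProduct_zero] at this
    have e1 : (M * A1) *ᵥ y = M *ᵥ u := by rw [← mulVec_mulVec]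
    have e2 : y ⬝ᵥ (A1ᵀ * M) *ᵥ (t • u) = t * (u ⬝ᵥ M *ᵥ u) := by
      rw [mulVec_smul, dotProduct_smul, smul_eq_mul, dotProduct_mulVec,
        ← vecMul_vecMul, vecMul_transpose, ← hu, ← dotProduct_mulVec]
    rw [e1, e2] at this
    simp only [mulVec_smul, smul_dotProduct, dotProduct_smul, smul_eq_mul] at this
    nlinarith [this]
  have hA2 : A2 = 0 := by
    apply key_aux M S hM
    intro t y
    have := h (Sum.elim (t • (A2 *ᵥ y)) (Sum.elim 0 y))
    set u := A2 *ᵥ y with hu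
    simp only [fromBlocks_mulVec, Sum.elim_comp_inl, Sum.elim_comp_inr,
      fromCols_mulVec_sumElim, fromRows_mulVec, sumElim_dotProduct_sumElim,
      mulVec_zero, zero_mulVec, add_zero, zero_add, Pi.add_apply, Sum.elim_inl,
      Sum.elim_inr, Pi.zero_apply, zero_dotProduct, dotProduct_add,
      dotProduct_zero] at this
    have e1 : (M * A2) *ᵥ y = M *ᵥ u := by rw [← mulVec_mulVec]
    have e2 : y ⬝ᵥ (A2ᵀ * M) *ᵥ (t • u) = t * (u ⬝ᵥ M *ᵥ u) := by
      rw [mulVec_smul, dotProduct_smul, smul_eq_mul, dotProduct_mulVec,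
        ← vecMul_vecMul, vecMul_transpose, ← hu, ← dotProduct_mulVec]
    rw [e1, e2] at this
    simp only [mulVec_smul, smul_dotProduct, dotProduct_smul, smul_eq_mul] at this
    nlinarith [this]
  rcases hA with h1 | h2
  · exact h1 hA1
  · exact h2 hA2
end
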